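/- Let S be a bi-ideal-free semiring and n ≥ 1. Then every bi-ideal I of M_n(S) contains all constant matrices ā for a ∈ S; consequently M_n(S) has a least bi-ideal, namely Q_a = M_n(S)·ā·M_n(S) + M_n(S) for any a ∈ S, and this equals the bi-ideal generated by ā. -/
import Mathlib


/-- A semiring in the sense of the paper: associative `+` and `*`, `+` commutative,
`*` distributing over `+` from both sides; no zero or unity assumed. -/
class PSemiring (S : Type) extends AddCommSemigroup S, Semigroup S where
  left_distrib : ∀ a b c : S, a * (b + c) = a * b + a * c
  right_distrib : ∀ a b c : S, (a + b) * c = a * c + b * c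

section Defs
variable {T : Type} [Add T] [Mul T]

def MulAbsorbing (w : T) : Prop := ∀ a : T, a * w = w ∧ w * a = w
def AddAbsorbing (w : T) : Prop := ∀ a : T, a + w = w
def AddNeutral (w : T) : Prop := ∀ a : T, a + w = a
def BiAbsorbing (w : T) : Prop := MulAbsorbing w ∧ AddAbsorbing w
def IsZero (w : T) : Prop := MulAbsorbing w ∧ AddNeutral w
def IsUnity (w : T) : Prop := ∀ a : T, w * a = a ∧ a * w = a

def IsBiIdeal (I : Set T) : Prop :=
  I.Nonempty ∧ ∀ a ∈ I, ∀ s : T, a + s ∈ I ∧ a * s ∈ I ∧ s * a ∈ I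

def IsCongruence (r : T → T → Prop) : Prop :=
  Equivalence r ∧ (∀ a b c d : T, r a b → r c d → r (a + c) (b + d)) ∧
    (∀ a b c d : T, r a b → r c d → r (a * c) (b * d))

/-- The standard quasiordering on a semiring. -/
def leS (a b : T) : Prop := a = b ∨ ∃ c : T, a + c = b

/-- `addPow m b` is the `(m+1)`-fold sum `b + ⋯ + b`. -/
def addPow : ℕ → T → T
  | 0, b => b
  | m + 1, b => addPow m b + b

end Defs

def CongSimple (T : Type) [Add T] [Mul T] : Prop :=
  (∃ a b : T, a ≠ b) ∧
    ∀ r : T → T → Prop, IsCongruence r →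
      (∀ a b : T, r a b ↔ a = b) ∨ (∀ a b : T, r a b)

def BiIdealSimple (T : Type) [Add T] [Mul T] : Prop :=
  (∃ a b : T, a ≠ b) ∧
    ∀ I : Set T, IsBiIdeal I → (∃ w : T, I = {w}) ∨ I = Set.univ

def BiIdealFree (T : Type) [Add T] [Mul T] : Prop :=
  (∃ a b : T, a ≠ b) ∧ ∀ I : Set T, IsBiIdeal I → I = Set.univ

/-- Sum of a nonempty family indexed by `Fin (n+1)`. -/
def finSum {S : Type} [Add S] : ∀ {n : ℕ}, (Fin (n + 1) → S) → S
  | 0, f => f 0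
  | n + 1, f => finSum (fun i : Fin (n + 1) => f i.castSucc) + f (Fin.last (n + 1))

/-- `Mat n S` is the semiring of `(n+1) × (n+1)` matrices over `S`. -/
structure Mat (n : ℕ) (S : Type) where
  entry : Fin (n + 1) → Fin (n + 1) → S

instance {n : ℕ} {S : Type} [Add S] : Add (Mat n S) :=
  ⟨fun A B => ⟨fun i j => A.entry i j + B.entry i j⟩⟩

instance {n : ℕ} {S : Type} [Add S] [Mul S] : Mul (Mat n S) :=
  ⟨fun A B => ⟨fun i j => finSum (fun k => A.entry i k * B.entry k j)⟩⟩

/-- The constant matrix `ā`. -/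
def Mat.const (n : ℕ) {S : Type} (a : S) : Mat n S := ⟨fun _ _ => a⟩


section MyAux

theorem Mat.ext' {n : ℕ} {S : Type} {A B : Mat n S}
    (h : ∀ i j, A.entry i j = B.entry i j) : A = B := by
  cases A; cases B
  simp only [Mat.mk.injEq]
  funext i j; exact h i j

variable {S : Type} [PSemiring S]

theorem finSum_add : ∀ {m : ℕ} (f g : Fin (m + 1) → S),
    finSum (fun i => f i + g i) = finSum f + finSum g
  | 0, f, g => rfl
  | m + 1, f, g => by
    show finSum (fun i : Fin (m + 1) => f i.castSucc + g i.castSucc) +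
        (f (Fin.last (m + 1)) + g (Fin.last (m + 1))) = _
    rw [finSum_add (fun i => f i.castSucc) (fun i => g i.castSucc)]
    show _ = (finSum (fun i : Fin (m + 1) => f i.castSucc) + f (Fin.last (m + 1))) +
        (finSum (fun i : Fin (m + 1) => g i.castSucc) + g (Fin.last (m + 1)))
    exact add_add_add_comm _ _ _ _

theorem mul_finSum : ∀ {m : ℕ} (a : S) (f : Fin (m + 1) → S),
    a * finSum f = finSum (fun i => a * f i)
  | 0, a, f => rfl
  | m + 1, a, f => by
    show a * (finSum (fun i : Fin (m + 1) => f i.castSucc) + f (Fin.last (m + 1))) = _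
    rw [PSemiring.left_distrib, mul_finSum a (fun i => f i.castSucc)]
    rfl

theorem finSum_mul : ∀ {m : ℕ} (a : S) (f : Fin (m + 1) → S),
    finSum f * a = finSum (fun i => f i * a)
  | 0, a, f => rfl
  | m + 1, a, f => by
    show (finSum (fun i : Fin (m + 1) => f i.castSucc) + f (Fin.last (m + 1))) * a = _
    rw [PSemiring.right_distrib, finSum_mul a (fun i => f i.castSucc)]
    rfl

theorem finSum_comm : ∀ {p q : ℕ} (f : Fin (p + 1) → Fin (q + 1) → S),
    finSum (fun i => finSum (fun j => f i j)) = finSum (fun j => finSum (fun i => f i j))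
  | 0, q, f => rfl
  | p + 1, q, f => by
    show finSum (fun i : Fin (p + 1) => finSum (fun j => f i.castSucc j)) +
        finSum (fun j => f (Fin.last (p + 1)) j) = _
    rw [finSum_comm (fun i j => f i.castSucc j), ← finSum_add]
    rfl

theorem mat_add_assoc {n : ℕ} (A B C : Mat n S) : A + B + C = A + (B + C) :=
  Mat.ext' fun i j => add_assoc _ _ _

theorem mat_mul_assoc {n : ℕ} (A B C : Mat n S) : A * B * C = A * (B * C) := by
  apply Mat.ext'
  intro i j
  show finSum (fun m => finSum (fun k => A.entry i k * B.entry k m) * C.entry m j) =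
    finSum (fun k => A.entry i k * finSum (fun m => B.entry k m * C.entry m j))
  calc finSum (fun m => finSum (fun k => A.entry i k * B.entry k m) * C.entry m j)
      = finSum (fun m => finSum (fun k => A.entry i k * B.entry k m * C.entry m j)) := by
        simp only [finSum_mul]
    _ = finSum (fun k => finSum (fun m => A.entry i k * B.entry k m * C.entry m j)) :=
        (finSum_comm _).symm
    _ = finSum (fun k => A.entry i k * finSum (fun m => B.entry k m * C.entry m j)) := by
        simp only [mul_finSum, mul_assoc]

theorem mat_right_distrib {n : ℕ} (A B C : Mat n S) : (A + B) * C = A * C + B * C := by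
  apply Mat.ext'
  intro i j
  show finSum (fun k => (A.entry i k + B.entry i k) * C.entry k j) = _
  simp only [PSemiring.right_distrib]
  exact finSum_add _ _

theorem mat_left_distrib {n : ℕ} (A B C : Mat n S) : A * (B + C) = A * B + A * C := by
  apply Mat.ext'
  intro i j
  show finSum (fun k => A.entry i k * (B.entry k j + C.entry k j)) = _
  simp only [PSemiring.left_distrib]
  exact finSum_add _ _

/-- In a bi-ideal-free semiring, every element is a sum of `m+1` elements. -/
theorem decomp (hS : BiIdealFree S) : ∀ (m : ℕ) (s : S), ∃ f : Fin (m + 1) → S, finSum f = s := by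
  have hsum : ∀ s : S, ∃ a b : S, a + b = s := by
    obtain ⟨a₀, _, _⟩ := hS.1
    have hbi : IsBiIdeal {x : S | ∃ a b : S, a + b = x} := by
      refine ⟨⟨a₀ + a₀, a₀, a₀, rfl⟩, ?_⟩
      rintro x ⟨a, b, rfl⟩ s
      exact ⟨⟨a, b + s, (add_assoc a b s).symm⟩,
        ⟨a * s, b * s, (PSemiring.right_distrib a b s).symm⟩,
        ⟨s * a, s * b, (PSemiring.left_distrib s a b).symm⟩⟩
    have := hS.2 _ hbi
    intro s
    exact (this ▸ Set.mem_univ s : s ∈ {x : S | ∃ a b : S, a + b = x})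
  intro m
  induction m with
  | zero => exact fun s => ⟨fun _ => s, rfl⟩
  | succ m ih =>
    intro s
    obtain ⟨t, u, htu⟩ := hsum s
    obtain ⟨f, hf⟩ := ih t
    set g : Fin (m + 1 + 1) → S := Fin.snoc f u with hg
    refine ⟨g, ?_⟩
    have h1 : finSum g =
        finSum (fun i : Fin (m + 1) => g i.castSucc) + g (Fin.last (m + 1)) := rfl
    rw [h1]
    simp only [hg, Fin.snoc_castSucc, Fin.snoc_last]
    rw [show (fun i : Fin (m+1) => f i) = f from rfl, hf, htu]

/-- Every bi-ideal of the matrix semiring contains all constant matrices. -/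
theorem const_mem (hS : BiIdealFree S) (n : ℕ)
    (I : Set (Mat n S)) (hI : IsBiIdeal I) (a : S) : Mat.const n a ∈ I := by
  obtain ⟨X, hX⟩ := hI.1
  obtain ⟨a₀, b₀, _⟩ := hS.1
  have hc : Mat.const n (finSum (fun m => (finSum fun k => a₀ * X.entry k m) * a₀)) ∈ I := by
    have h1 : Mat.const n a₀ * X ∈ I := (hI.2 X hX (Mat.const n a₀)).2.2
    have h2 : Mat.const n a₀ * X * Mat.const n a₀ ∈ I := (hI.2 _ h1 (Mat.const n a₀)).2.1
    have he : Mat.const n (finSum (fun m => (finSum fun k => a₀ * X.entry k m) * a₀)) =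
        Mat.const n a₀ * X * Mat.const n a₀ := Mat.ext' fun i j => rfl
    rwa [he]
  have hJ : IsBiIdeal {s : S | Mat.const n s ∈ I} := by
    refine ⟨⟨_, hc⟩, ?_⟩
    intro s hs t
    refine ⟨?_, ?_, ?_⟩
    · have h := (hI.2 _ hs (Mat.const n t)).1
      have he : Mat.const n (s + t) = Mat.const n s + Mat.const n t := Mat.ext' fun i j => rfl
      show Mat.const n (s + t) ∈ I
      rwa [he]
    · obtain ⟨y, hy⟩ := decomp hS n t
      have he : Mat.const n (s * t) = Mat.const n s * (⟨fun k _ => y k⟩ : Mat n S) := by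
        apply Mat.ext'
        intro i j
        show s * t = finSum (fun k => s * y k)
        rw [← mul_finSum, hy]
      show Mat.const n (s * t) ∈ I
      rw [he]
      exact (hI.2 _ hs _).2.1
    · obtain ⟨y, hy⟩ := decomp hS n t
      have he : Mat.const n (t * s) = (⟨fun _ k => y k⟩ : Mat n S) * Mat.const n s := by
        apply Mat.ext'
        intro i j
        show t * s = finSum (fun k => y k * s)
        rw [← finSum_mul, hy]
      show Mat.const n (t * s) ∈ I
      rw [he]
      exact (hI.2 _ hs _).2.2
  have := hS.2 _ hJ
  exact (this ▸ Set.mem_univ a : a ∈ {s : S | Mat.const n s ∈ I})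

end MyAux

/-- if `S` is bi-ideal-free, then every bi-ideal of `M_n(S)` contains
all constant matrices; moreover `Q_a = M_n(S)·ā·M_n(S) + M_n(S)` is the least
bi-ideal of `M_n(S)` and equals the bi-ideal generated by `ā`, for every `a ∈ S`. -/
theorem stmt14 {S : Type} [PSemiring S] (hS : BiIdealFree S) (n : ℕ) :
    (∀ I : Set (Mat n S), IsBiIdeal I → ∀ a : S, Mat.const n a ∈ I) ∧
    ∀ a : S,
      IsBiIdeal {X : Mat n S | ∃ A B C : Mat n S, A * Mat.const n a * B + C = X} ∧
      (∀ I : Set (Mat n S), IsBiIdeal I →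
        {X : Mat n S | ∃ A B C : Mat n S, A * Mat.const n a * B + C = X} ⊆ I) ∧
      {X : Mat n S | ∃ A B C : Mat n S, A * Mat.const n a * B + C = X} =
        ⋂₀ {I : Set (Mat n S) | IsBiIdeal I ∧ Mat.const n a ∈ I} := by
  have part1 : ∀ I : Set (Mat n S), IsBiIdeal I → ∀ a : S, Mat.const n a ∈ I :=
    fun I hI a => const_mem hS n I hI a
  refine ⟨part1, fun a => ?_⟩
  set ca := Mat.const n a with hca
  have hQ : IsBiIdeal {X : Mat n S | ∃ A B C : Mat n S, A * ca * B + C = X} := by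
    refine ⟨⟨ca * ca * ca + ca, ca, ca, ca, rfl⟩, ?_⟩
    rintro X ⟨A, B, C, rfl⟩ M
    refine ⟨⟨A, B, C + M, (mat_add_assoc _ _ _).symm⟩,
      ⟨A, B * M, C * M, ?_⟩, ⟨M * A, B, M * C, ?_⟩⟩
    · rw [mat_right_distrib, mat_mul_assoc (A * ca) B M]
    · rw [mat_left_distrib, ← mat_mul_assoc M (A * ca) B, ← mat_mul_assoc M A ca]
  have hmin : ∀ I : Set (Mat n S), IsBiIdeal I →
      {X : Mat n S | ∃ A B C : Mat n S, A * ca * B + C = X} ⊆ I := by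
    intro I hI X hX
    obtain ⟨A, B, C, rfl⟩ := hX
    have h1 : ca ∈ I := part1 I hI a
    have h2 : A * ca ∈ I := (hI.2 _ h1 A).2.2
    have h3 : A * ca * B ∈ I := (hI.2 _ h2 B).2.1
    exact (hI.2 _ h3 C).1
  refine ⟨hQ, hmin, ?_⟩
  apply Set.Subset.antisymm
  · intro X hX
    rw [Set.mem_sInter]
    rintro I ⟨hI, -⟩
    exact hmin I hI hX
  · intro X hX
    exact Set.mem_sInter.mp hX _ ⟨hQ, part1 _ hQ a⟩
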